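/- For the six-qubit octahedron state |Ψ₆⟩ = (|S_{6,1}⟩ + |S_{6,5}⟩)/√2, the maximal overlap with symmetric product states is max_σ |⟨Ψ₆|σ^{⊗6}⟩|² = 2/9, so E_G(|Ψ₆⟩) = log₂(9/2). -/

import Mathlib

open Finset

noncomputable def overlap {n : ℕ} (f g : (Fin n → Fin 2) → ℂ) : ℂ :=
  ∑ x : Fin n → Fin 2, (starRingEnd ℂ) (f x) * g x

noncomputable def symmPow (n : ℕ) (σ : Fin 2 → ℂ) : (Fin n → Fin 2) → ℂ :=
  fun x => ∏ i, σ (x i)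

noncomputable def prodState {n : ℕ} (σ : Fin n → Fin 2 → ℂ) : (Fin n → Fin 2) → ℂ :=
  fun x => ∏ j, σ j (x j)

def qubitUnit (σ : Fin 2 → ℂ) : Prop :=
  ‖σ 0‖ ^ 2 + ‖σ 1‖ ^ 2 = 1

noncomputable def dicke (n k : ℕ) : (Fin n → Fin 2) → ℂ :=
  fun x => if (∑ i, ((x i : ℕ))) = k then ((1 / Real.sqrt (n.choose k) : ℝ) : ℂ) else 0

noncomputable def bloch (θ ph : ℝ) : Fin 2 → ℂ :=
  fun i => if i = 0 then ((Real.cos (θ/2) : ℝ) : ℂ)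
           else Complex.exp (Complex.I * ph) * ((Real.sin (θ/2) : ℝ) : ℂ)

def isCPP (n : ℕ) (ψ : (Fin n → Fin 2) → ℂ) (σ : Fin 2 → ℂ) : Prop :=
  qubitUnit σ ∧ ∀ τ, qubitUnit τ →
    ‖overlap (symmPow n τ) ψ‖ ≤ ‖overlap (symmPow n σ) ψ‖

noncomputable def octahedronState : (Fin 6 → Fin 2) → ℂ :=
  fun x => ((1 / Real.sqrt 2 : ℝ) : ℂ) * (dicke 6 1 x + dicke 6 5 x)

/-! ### Auxiliary lemmas -/

noncomputable def wsum (g : Fin 2 → ℂ) (n k : ℕ) : ℂ :=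
  ∑ x : Fin n → Fin 2, (if (∑ i, ((x i : ℕ))) = k then (1:ℂ) else 0) * ∏ i, g (x i)

lemma sum_pi_succ {n : ℕ} (F : (Fin (n+1) → Fin 2) → ℂ) :
    ∑ x, F x = ∑ i : Fin 2, ∑ y : Fin n → Fin 2, F (Fin.cons i y) := by
  rw [← (Fin.consEquiv fun _ => Fin 2).sum_comp F, Fintype.sum_prod_type]
  rfl

lemma wsum_zero_zero (g : Fin 2 → ℂ) : wsum g 0 0 = 1 := by
  unfold wsum
  rw [Fintype.sum_subsingleton _ ![]]
  simp

lemma wsum_zero_succ (g : Fin 2 → ℂ) (k : ℕ) : wsum g 0 (k+1) = 0 := by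
  unfold wsum
  rw [Fintype.sum_subsingleton _ ![]]
  simp

lemma wsum_succ_zero (g : Fin 2 → ℂ) (n : ℕ) :
    wsum g (n+1) 0 = g 0 * wsum g n 0 := by
  unfold wsum
  rw [sum_pi_succ, Fin.sum_univ_two]
  simp only [Fin.sum_univ_succ, Fin.prod_univ_succ, Fin.cons_zero, Fin.cons_succ,
    Fin.val_zero, Fin.val_one, zero_add]
  rw [Finset.mul_sum]
  have h2 : ∑ y : Fin n → Fin 2,
      (if 1 + ∑ i, ((y i : ℕ)) = 0 then (1:ℂ) else 0) * (g 1 * ∏ i, g (y i)) = 0 := by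
    refine Finset.sum_eq_zero fun y _ => ?_
    rw [if_neg (by omega)]
    ring
  rw [h2, add_zero]
  exact Finset.sum_congr rfl fun y _ => by ring

lemma wsum_succ_succ (g : Fin 2 → ℂ) (n k : ℕ) :
    wsum g (n+1) (k+1) = g 0 * wsum g n (k+1) + g 1 * wsum g n k := by
  unfold wsum
  rw [sum_pi_succ, Fin.sum_univ_two]
  simp only [Fin.sum_univ_succ, Fin.prod_univ_succ, Fin.cons_zero, Fin.cons_succ,
    Fin.val_zero, Fin.val_one, zero_add]
  rw [Finset.mul_sum, Finset.mul_sum]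
  congr 1
  · exact Finset.sum_congr rfl fun y _ => by ring
  · refine Finset.sum_congr rfl fun y _ => ?_
    have : (1 + ∑ i, ((y i : ℕ)) = k + 1) ↔ ((∑ i, ((y i : ℕ))) = k) := by omega
    rw [if_congr this rfl rfl]
    ring

lemma wsum_eq (g : Fin 2 → ℂ) : ∀ n k : ℕ, wsum g n k = (n.choose k : ℂ) * g 0 ^ (n-k) * g 1 ^ k := by
  intro n
  induction n with
  | zero =>
    intro k
    cases k with
    | zero => simpa using wsum_zero_zero g
    | succ k => simp [wsum_zero_succ]
  | succ n ih =>
    intro k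
    cases k with
    | zero =>
      rw [wsum_succ_zero, ih 0]
      simp [pow_succ]
      ring
    | succ k =>
      rw [wsum_succ_succ, ih, ih, Nat.succ_sub_succ, Nat.choose_succ_succ]
      rcases lt_or_ge n (k+1) with h | h
      · rw [Nat.choose_eq_zero_of_lt h]
        have h2 : n - k = 0 := by omega
        have h3 : n - (k+1) = 0 := by omega
        rw [h2, h3]
        push_cast
        ring
      · have h3 : n - k = (n - (k+1)) + 1 := by omega
        rw [h3]
        push_cast
        ring

lemma wsum_6_1 (g : Fin 2 → ℂ) : wsum g 6 1 = 6 * g 0 ^ 5 * g 1 := by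
  rw [wsum_eq]
  norm_num

lemma wsum_6_5 (g : Fin 2 → ℂ) : wsum g 6 5 = 6 * g 0 * g 1 ^ 5 := by
  rw [wsum_eq]
  norm_num

lemma sqrt3_mul : (Real.sqrt 3) * (Real.sqrt 2 * Real.sqrt 6) = 6 := by
  rw [← Real.sqrt_mul (by norm_num : (0:ℝ) ≤ 2), ← Real.sqrt_mul (by norm_num : (0:ℝ) ≤ 3),
    show (3:ℝ)*(2*6) = 6^2 by norm_num, Real.sqrt_sq (by norm_num)]

lemma overlap_formula (σ : Fin 2 → ℂ) :
    overlap (symmPow 6 σ) octahedronState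
      = ((Real.sqrt 3 : ℝ) : ℂ) * ((starRingEnd ℂ) (σ 0) ^ 5 * (starRingEnd ℂ) (σ 1)
          + (starRingEnd ℂ) (σ 0) * ((starRingEnd ℂ) (σ 1)) ^ 5) := by
  set g : Fin 2 → ℂ := fun i => (starRingEnd ℂ) (σ i) with hg
  have key : overlap (symmPow 6 σ) octahedronState
      = ((1 / Real.sqrt 2 : ℝ) : ℂ) * (((1 / Real.sqrt 6 : ℝ) : ℂ) *
          (wsum g 6 1 + wsum g 6 5)) := by
    unfold overlap symmPow octahedronState dicke wsum
    rw [mul_add, Finset.mul_sum, Finset.mul_sum, ← Finset.sum_add_distrib,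
      Finset.mul_sum]
    refine Finset.sum_congr rfl fun x _ => ?_
    rw [map_prod]
    rw [show Nat.choose 6 1 = 6 from rfl, show Nat.choose 6 5 = 6 from rfl]
    simp only [hg]
    split_ifs <;> ring
  have s2 : Real.sqrt 2 ≠ 0 := by positivity
  have s6 : Real.sqrt 6 ≠ 0 := by positivity
  have hr : (1 / Real.sqrt 2) * (1 / Real.sqrt 6) * 6 = Real.sqrt 3 := by
    field_simp
    linarith [sqrt3_mul]
  have hC : ((1 / Real.sqrt 2 : ℝ) : ℂ) * ((1 / Real.sqrt 6 : ℝ) : ℂ) * 6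
      = ((Real.sqrt 3 : ℝ) : ℂ) := by
    calc ((1 / Real.sqrt 2 : ℝ) : ℂ) * ((1 / Real.sqrt 6 : ℝ) : ℂ) * 6
        = (((1 / Real.sqrt 2) * (1 / Real.sqrt 6) * 6 : ℝ) : ℂ) := by push_cast; ring
      _ = _ := by rw [hr]
  rw [key, wsum_6_1, wsum_6_5]
  linear_combination (g 0 ^ 5 * g 1 + g 0 * g 1 ^ 5) * hC

lemma poly_bound {a b : ℝ} (ha : 0 ≤ a) (hb : 0 ≤ b) (hab : a^2 + b^2 = 1) :
    3 * (a^5*b + a*b^5)^2 ≤ 2/9 := by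
  have hq : a^2*b^2 ≤ 1/4 := by nlinarith [sq_nonneg (a-b), sq_nonneg (a+b)]
  have h4 : a^4 + b^4 = 1 - 2*(a^2*b^2) := by
    linear_combination (a^2 + b^2 + 1) * hab
  have hre : (a^5*b + a*b^5)^2 = a^2*b^2*(1 - 2*(a^2*b^2))^2 := by
    linear_combination (a^2*b^2*(a^4 + b^4 + 1 - 2*(a^2*b^2))) * h4
  have key : a^2*b^2*(1 - 2*(a^2*b^2))^2 ≤ 2/27 := by
    nlinarith [mul_nonneg (sq_nonneg (a^2*b^2 - 1/6))
      (show (0:ℝ) ≤ 2/3 - a^2*b^2 by linarith)]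
  linarith [hre, key]

lemma overlap_sq_le (σ : Fin 2 → ℂ) (h : qubitUnit σ) :
    ‖overlap (symmPow 6 σ) octahedronState‖ ^ 2 ≤ 2/9 := by
  rw [overlap_formula]
  set a := ‖σ 0‖ with ha'
  set b := ‖σ 1‖ with hb'
  have ha : 0 ≤ a := norm_nonneg _
  have hb : 0 ≤ b := norm_nonneg _
  have hab : a^2 + b^2 = 1 := h
  have htri : ‖(starRingEnd ℂ) (σ 0) ^ 5 * (starRingEnd ℂ) (σ 1)
      + (starRingEnd ℂ) (σ 0) * ((starRingEnd ℂ) (σ 1)) ^ 5‖ ≤ a^5*b + a*b^5 := by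
    refine le_trans (norm_add_le _ _) (le_of_eq ?_)
    simp [norm_mul, norm_pow, Complex.norm_conj, a, b]
  rw [norm_mul, Complex.norm_real, Real.norm_eq_abs, abs_of_nonneg (Real.sqrt_nonneg 3), mul_pow,
    Real.sq_sqrt (by norm_num : (0:ℝ) ≤ 3)]
  have h2 : ‖(starRingEnd ℂ) (σ 0) ^ 5 * (starRingEnd ℂ) (σ 1)
      + (starRingEnd ℂ) (σ 0) * ((starRingEnd ℂ) (σ 1)) ^ 5‖ ^ 2 ≤ (a^5*b + a*b^5)^2 :=
    pow_le_pow_left₀ (norm_nonneg _) htri 2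
  have := poly_bound ha hb hab
  linarith

noncomputable def witSigma : Fin 2 → ℂ :=
  fun i => if i = 0 then ((Real.sqrt ((3 + Real.sqrt 3)/6) : ℝ) : ℂ)
           else ((Real.sqrt ((3 - Real.sqrt 3)/6) : ℝ) : ℂ)

lemma sqrt3_le_three : Real.sqrt 3 ≤ 3 := by
  nlinarith [Real.sq_sqrt (by norm_num : (0:ℝ) ≤ 3), Real.sqrt_nonneg 3]

lemma witA_sq : (Real.sqrt ((3 + Real.sqrt 3)/6))^2 = (3 + Real.sqrt 3)/6 :=
  Real.sq_sqrt (by positivity)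

lemma witB_sq : (Real.sqrt ((3 - Real.sqrt 3)/6))^2 = (3 - Real.sqrt 3)/6 :=
  Real.sq_sqrt (by linarith [sqrt3_le_three])

lemma wit_unit : qubitUnit witSigma := by
  have h0 : witSigma 0 = ((Real.sqrt ((3 + Real.sqrt 3)/6) : ℝ) : ℂ) := rfl
  have h1 : witSigma 1 = ((Real.sqrt ((3 - Real.sqrt 3)/6) : ℝ) : ℂ) := rfl
  unfold qubitUnit
  rw [h0, h1, Complex.norm_real, Complex.norm_real, Real.norm_eq_abs, Real.norm_eq_abs, sq_abs, sq_abs, witA_sq, witB_sq]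
  ring

lemma wit_val : ‖overlap (symmPow 6 witSigma) octahedronState‖ ^ 2 = 2/9 := by
  rw [overlap_formula]
  set A := Real.sqrt ((3 + Real.sqrt 3)/6) with hA'
  set B := Real.sqrt ((3 - Real.sqrt 3)/6) with hB'
  have hs0 : witSigma 0 = ((A : ℝ) : ℂ) := rfl
  have hs1 : witSigma 1 = ((B : ℝ) : ℂ) := rfl
  rw [hs0, hs1, Complex.conj_ofReal, Complex.conj_ofReal]
  have hz : ((A : ℝ) : ℂ)^5 * ((B : ℝ) : ℂ) + ((A : ℝ) : ℂ) * ((B : ℝ) : ℂ)^5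
      = ((A^5*B + A*B^5 : ℝ) : ℂ) := by push_cast; ring
  rw [hz, ← Complex.ofReal_mul, Complex.norm_real, Real.norm_eq_abs, sq_abs]
  have hr2 : (Real.sqrt 3)^2 = 3 := Real.sq_sqrt (by norm_num)
  have e0 : A^2*B^2 = 1/6 := by
    rw [witA_sq, witB_sq]; linear_combination (-(1:ℝ)/36) * hr2
  have e4 : A^4 + B^4 = 2/3 := by
    rw [show A^4 = (A^2)^2 by ring, show B^4 = (B^2)^2 by ring, witA_sq, witB_sq]
    linear_combination ((1:ℝ)/18) * hr2
  calc (Real.sqrt 3 * (A^5*B + A*B^5))^2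
      = (Real.sqrt 3)^2 * (A^2*B^2) * (A^4 + B^4)^2 := by ring
    _ = 3 * (1/6) * (2/3)^2 := by rw [hr2, e0, e4]
    _ = 2/9 := by norm_num

theorem octahedron_state_geometric_measure :
    (∀ σ : Fin 2 → ℂ, qubitUnit σ →
      ‖overlap (symmPow 6 σ) octahedronState‖ ^ 2 ≤ 2 / 9) ∧
    (∃ σ : Fin 2 → ℂ, qubitUnit σ ∧
      ‖overlap (symmPow 6 σ) octahedronState‖ ^ 2 = 2 / 9) ∧
    - Real.logb 2 (sSup {a : ℝ | ∃ σ : Fin 2 → ℂ, qubitUnit σ ∧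
        a = ‖overlap (symmPow 6 σ) octahedronState‖ ^ 2})
      = Real.logb 2 (9 / 2) := by
  refine ⟨overlap_sq_le, ⟨witSigma, wit_unit, wit_val⟩, ?_⟩
  have hmem : (2/9 : ℝ) ∈ {a : ℝ | ∃ σ : Fin 2 → ℂ, qubitUnit σ ∧
      a = ‖overlap (symmPow 6 σ) octahedronState‖ ^ 2} :=
    ⟨witSigma, wit_unit, wit_val.symm⟩
  have hub : ∀ x ∈ {a : ℝ | ∃ σ : Fin 2 → ℂ, qubitUnit σ ∧
      a = ‖overlap (symmPow 6 σ) octahedronState‖ ^ 2}, x ≤ 2/9 := by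
    rintro x ⟨σ, hσ, rfl⟩
    exact overlap_sq_le σ hσ
  have hsup : sSup {a : ℝ | ∃ σ : Fin 2 → ℂ, qubitUnit σ ∧
      a = ‖overlap (symmPow 6 σ) octahedronState‖ ^ 2} = 2/9 :=
    le_antisymm (csSup_le ⟨_, hmem⟩ hub) (le_csSup ⟨2/9, hub⟩ hmem)
  rw [hsup, show (2/9 : ℝ) = (9/2)⁻¹ by norm_num, Real.logb_inv, neg_neg]
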